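/- Let (X,T) be a topological dynamical system, μ ∈ M(X,T), f ∈ L²(μ), and A = {a_i} a strictly increasing sequence such that the pseudo-metric functions (x,y) ↦ |f(T^{a_n}x) − f(T^{a_n}y)| converge μ×μ-almost everywhere to |f(x) − f(y)|. Then f is μ-A-equicontinuous. -/

import Mathlib

open MeasureTheory Filter Topology BoundedContinuousFunction
open scoped BoundedContinuousFunction ENNReal NNReal

lemma lusin_unif {X : Type*} [MetricSpace X] [CompactSpace X] [MeasurableSpace X] [BorelSpace X]
    (μ : Measure X) [IsProbabilityMeasure μ] {g : X → ℝ}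
    (hsm : StronglyMeasurable g) (hg : MemLp g 2 μ) {β : ℝ} (hβ : 0 < β) :
    ∃ K : Set X, IsCompact K ∧ MeasurableSet K ∧ μ Kᶜ ≤ ENNReal.ofReal β ∧
      ∀ ε' > (0:ℝ), ∃ δ > (0:ℝ), ∀ x ∈ K, ∀ y ∈ K, dist x y < δ → |g x - g y| < ε' := by
  have hφ : ∀ k : ℕ, ∃ φ : X →ᵇ ℝ,
      eLpNorm (g - (φ : X → ℝ)) 2 μ ≤ ENNReal.ofReal (1/(k+1)) := by
    intro k
    obtain ⟨φ, h1, -⟩ := hg.exists_boundedContinuous_eLpNorm_sub_le (by norm_num)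
      (by positivity : ENNReal.ofReal (1/(k+1:ℝ)) ≠ 0)
    exact ⟨φ, by exact_mod_cast h1⟩
  choose φ hφ using hφ
  have hmeas : TendstoInMeasure μ (fun k => (φ k : X → ℝ)) atTop g := by
    apply tendstoInMeasure_of_tendsto_eLpNorm (p := 2) two_ne_zero
      (fun k => (φ k).continuous.aestronglyMeasurable) hg.aestronglyMeasurable
    have hb : Tendsto (fun k : ℕ => ENNReal.ofReal (1/(k+1))) atTop (𝓝 0) := by
      rw [← ENNReal.ofReal_zero]
      exact ENNReal.tendsto_ofReal tendsto_one_div_add_atTop_nhds_zero_nat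
    refine tendsto_of_tendsto_of_tendsto_of_le_of_le tendsto_const_nhds hb
      (fun k => by simp) (fun k => ?_)
    rw [eLpNorm_sub_comm]; exact hφ k
  obtain ⟨ns, -, hns⟩ := hmeas.exists_seq_tendsto_ae
  obtain ⟨t, htm, htμ, htu⟩ := tendstoUniformlyOn_of_ae_tendsto'
    (fun i => ((φ (ns i)).continuous).stronglyMeasurable) hsm hns (half_pos hβ)
  have hcont : ContinuousOn g tᶜ :=
    htu.continuousOn (Frequently.of_forall fun i => ((φ (ns i)).continuous).continuousOn)
  obtain ⟨K, hKt, hKclosed, hK⟩ := htm.compl.exists_isClosed_lt_add (measure_ne_top μ _)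
    (by positivity : ENNReal.ofReal (β/2) ≠ 0)
  have hKc : IsCompact K := hKclosed.isCompact
  refine ⟨K, hKc, hKclosed.measurableSet, ?_, ?_⟩
  · have h1 : Kᶜ ⊆ t ∪ (tᶜ \ K) := by
      intro x hx
      by_cases hxt : x ∈ t
      · exact Or.inl hxt
      · exact Or.inr ⟨hxt, hx⟩
    calc μ Kᶜ ≤ μ t + μ (tᶜ \ K) := le_trans (measure_mono h1) (measure_union_le _ _)
      _ ≤ ENNReal.ofReal (β/2) + ENNReal.ofReal (β/2) := by
          refine add_le_add htμ ?_
          rw [measure_diff hKt hKclosed.measurableSet.nullMeasurableSet (measure_ne_top μ _)]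
          exact tsub_le_iff_left.2 (le_of_lt hK)
      _ = ENNReal.ofReal β := by
          rw [← ENNReal.ofReal_add (by positivity) (by positivity)]; norm_num
  · intro ε' hε'
    have hucont : UniformContinuousOn g K :=
      hKc.uniformContinuousOn_of_continuous (hcont.mono hKt)
    rw [Metric.uniformContinuousOn_iff] at hucont
    obtain ⟨δ, hδ, h⟩ := hucont ε' hε'
    exact ⟨δ, hδ, fun x hx y hy hxy => by rw [← Real.dist_eq]; exact h x hx y hy hxy⟩

theorem stmt18 {X : Type*} [MetricSpace X] [CompactSpace X] [MeasurableSpace X]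
    [BorelSpace X] (μ : Measure X) [IsProbabilityMeasure μ] (T : X ≃ₜ X)
    (hT : MeasurePreserving T μ μ) (f : X → ℝ) (hf : MemLp f 2 μ)
    (a : ℕ → ℕ) (ha : StrictMono a)
    (hae : ∀ᵐ p ∂(μ.prod μ), Tendsto
      (fun n => |f ((⇑T)^[a n] p.1) - f ((⇑T)^[a n] p.2)|) atTop
      (𝓝 (|f p.1 - f p.2|))) :
    ∀ τ > (0 : ℝ), ∀ ε > (0 : ℝ), ∃ K : Set X, IsCompact K ∧
      μ K > ENNReal.ofReal (1 - τ) ∧ ∃ δ > (0 : ℝ),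
      ∀ x ∈ K, ∀ y ∈ K, dist x y < δ →
        ∀ n : ℕ, |f ((⇑T)^[a n] x) - f ((⇑T)^[a n] y)| < ε := by
  intro τ hτ ε hε
  -- shrink τ
  set c : ℝ := min τ 1 / 2 with hc
  have hc0 : 0 < c := by have := lt_min hτ one_pos; positivity
  have hc1 : c ≤ 1 / 2 := by
    have : min τ 1 ≤ 1 := min_le_right _ _
    rw [hc]; linarith
  have hcτ : 1 - τ ≤ 1 - c := by
    have h1 : min τ 1 ≤ τ := min_le_left _ _
    rw [hc]; linarith
  set β : ℝ := c / 8 with hβdef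
  have hβ0 : 0 < β := by positivity
  have hβ1 : β ≤ 1 := by rw [hβdef]; linarith
  -- measurable representative
  set F : X → ℝ := hf.1.mk f with hFdef
  have hFsm : StronglyMeasurable F := hf.1.stronglyMeasurable_mk
  have hfF : f =ᵐ[μ] F := hf.1.ae_eq_mk
  have hFmeas : Measurable F := hFsm.measurable
  have hFL2 : MemLp F 2 μ := hf.ae_eq hfF
  -- full measure invariant set where f = F
  have hnull : μ {x | ¬ f x = F x} = 0 := ae_iff.1 hfF
  obtain ⟨B, hBsup, hBm, hBnull⟩ := exists_measurable_superset_of_null hnull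
  set S : Set X := ⋂ k : ℕ, (⇑T)^[k] ⁻¹' Bᶜ with hSdef
  have hSm : MeasurableSet S :=
    MeasurableSet.iInter fun k => (hBm.compl).preimage (T.continuous.measurable.iterate k)
  have hS_eq : ∀ x ∈ S, ∀ k : ℕ, f ((⇑T)^[k] x) = F ((⇑T)^[k] x) := by
    intro x hx k
    have hxk : (⇑T)^[k] x ∈ Bᶜ := Set.mem_iInter.1 hx k
    by_contra hne
    exact hxk (hBsup hne)
  have hSnull : μ Sᶜ = 0 := by
    rw [hSdef, Set.compl_iInter]
    refine measure_iUnion_null fun k => ?_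
    have hmp : MeasurePreserving (⇑T)^[k] μ μ := hT.iterate k
    have : ((⇑T)^[k] ⁻¹' Bᶜ)ᶜ = (⇑T)^[k] ⁻¹' B := by
      rw [Set.preimage_compl, compl_compl]
    rw [this, hmp.measure_preimage hBm.nullMeasurableSet]
    exact hBnull
  have hSone : μ S = 1 := (prob_compl_eq_zero_iff hSm).1 hSnull
  -- transfer hae to F
  have haeF : ∀ᵐ p ∂(μ.prod μ), Tendsto
      (fun n => |F ((⇑T)^[a n] p.1) - F ((⇑T)^[a n] p.2)|) atTop
      (𝓝 (|F p.1 - F p.2|)) := by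
    have hmem : ∀ᵐ p ∂(μ.prod μ), p ∈ S ×ˢ S := by
      rw [ae_iff]
      have : {p : X × X | ¬ p ∈ S ×ˢ S} = (S ×ˢ S)ᶜ := rfl
      rw [this, prob_compl_eq_zero_iff (hSm.prod hSm), Measure.prod_prod, hSone, one_mul]
    filter_upwards [hae, hmem] with p hp hpmem
    obtain ⟨h1, h2⟩ := hpmem
    have ef1 : f p.1 = F p.1 := by simpa using hS_eq p.1 h1 0
    have ef2 : f p.2 = F p.2 := by simpa using hS_eq p.2 h2 0
    have : (fun n => |f ((⇑T)^[a n] p.1) - f ((⇑T)^[a n] p.2)|)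
        = fun n => |F ((⇑T)^[a n] p.1) - F ((⇑T)^[a n] p.2)| :=
      funext fun n => by rw [hS_eq p.1 h1 (a n), hS_eq p.2 h2 (a n)]
    rw [← this, ← ef1, ← ef2]
    exact hp
  -- the pair pseudometric functions
  set g2 : X × X → ℝ := fun p => |F p.1 - F p.2| with hg2def
  set d2 : ℕ → X × X → ℝ := fun k p => |F ((⇑T)^[k] p.1) - F ((⇑T)^[k] p.2)| with hd2def
  have hg2m : Measurable g2 :=
    ((hFmeas.comp measurable_fst).sub (hFmeas.comp measurable_snd)).abs
  have hd2m : ∀ k, Measurable (d2 k) := fun k =>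
    (((hFmeas.comp (T.continuous.measurable.iterate k)).comp measurable_fst).sub
      ((hFmeas.comp (T.continuous.measurable.iterate k)).comp measurable_snd)).abs
  -- the Egorov-type sets
  set E : ℕ → Set (X × X) := fun N => ⋂ k : ℕ, {p | d2 (a (N + k)) p ≤ g2 p + ε / 8} with hEdef
  have hEm : ∀ N, MeasurableSet (E N) := fun N =>
    MeasurableSet.iInter fun k => measurableSet_le (hd2m _) (hg2m.add measurable_const)
  have hEmem : ∀ N p, p ∈ E N ↔ ∀ k, d2 (a (N + k)) p ≤ g2 p + ε / 8 := by
    intro N p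
    rw [hEdef]
    simp only [Set.mem_iInter, Set.mem_setOf_eq]
  have hEmono : Monotone E := by
    intro N M hNM p hp
    rw [hEmem] at hp ⊢
    intro k
    have := hp (M - N + k)
    rwa [show N + (M - N + k) = M + k by omega] at this
  have hEcover : (μ.prod μ) (⋃ N, E N) = 1 := by
    rw [← prob_compl_eq_zero_iff (MeasurableSet.iUnion hEm), measure_eq_zero_iff_ae_notMem]
    filter_upwards [haeF] with p hp
    rw [Set.notMem_compl_iff]
    have h8 : g2 p < g2 p + ε / 8 := lt_add_of_pos_right _ (by positivity)
    obtain ⟨N, hN⟩ := eventually_atTop.1 (hp.eventually (eventually_lt_nhds h8))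
    exact Set.mem_iUnion.2 ⟨N, (hEmem N p).2 fun k => (hN (N + k) (by omega)).le⟩
  -- level sets for F
  set w : ℝ := ε / 16 with hwdef
  have hw0 : 0 < w := by positivity
  set V : ℤ → Set X := fun i => F ⁻¹' Set.Ico (i * w) ((i + 1) * w) with hVdef
  have hVm : ∀ i, MeasurableSet (V i) := fun i => hFmeas measurableSet_Ico
  have hVdisj : Pairwise (Function.onFun Disjoint V) := by
    intro i j hij
    rw [Function.onFun, Set.disjoint_left]
    rintro x ⟨hi1, hi2⟩ ⟨hj1, hj2⟩
    rcases lt_or_gt_of_ne hij with h | h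
    · have : (i + 1 : ℤ) ≤ j := h
      have : ((i : ℝ) + 1) * w ≤ (j : ℝ) * w := by
        have : ((i : ℝ) + 1) ≤ (j : ℝ) := by exact_mod_cast this
        nlinarith
      push_cast at hi2 hj1
      linarith
    · have : (j + 1 : ℤ) ≤ i := h
      have : ((j : ℝ) + 1) * w ≤ (i : ℝ) * w := by
        have : ((j : ℝ) + 1) ≤ (i : ℝ) := by exact_mod_cast this
        nlinarith
      push_cast at hi1 hj2
      linarith
  have hVcover : (⋃ i, V i) = Set.univ := by
    rw [Set.eq_univ_iff_forall]
    intro x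
    refine Set.mem_iUnion.2 ⟨⌊F x / w⌋, ?_, ?_⟩
    · push_cast
      rw [← le_div_iff₀ hw0]
      exact Int.floor_le _
    · push_cast
      rw [← div_lt_iff₀ hw0]
      exact Int.lt_floor_add_one _
  have hVsum : (∑' i, μ (V i)) = 1 := by
    rw [← measure_iUnion hVdisj hVm, hVcover, measure_univ]
  have hβlt1 : ENNReal.ofReal β < 1 := by
    rw [← ENNReal.ofReal_one]
    exact ENNReal.ofReal_lt_ofReal_iff_of_nonneg hβ0.le |>.2 (by linarith)
  have hIfin : ∃ I : Finset ℤ, 1 - ENNReal.ofReal β < ∑ i ∈ I, μ (V i) := by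
    have h1 : (1 : ℝ≥0∞) - ENNReal.ofReal β < ∑' i, μ (V i) := by
      rw [hVsum]
      exact ENNReal.sub_lt_self ENNReal.one_ne_top one_ne_zero
        (by simpa using hβ0)
    rw [ENNReal.tsum_eq_iSup_sum] at h1
    exact lt_iSup_iff.1 h1
  obtain ⟨I, hI⟩ := hIfin
  set I' : Finset ℤ := I.filter (fun i => 0 < μ (V i)) with hI'def
  have hIsum : ∑ i ∈ I', μ (V i) = ∑ i ∈ I, μ (V i) := by
    rw [hI'def]
    refine Finset.sum_filter_of_ne fun i _ hne => ?_
    exact pos_iff_ne_zero.2 hne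
  set U : Set X := ⋃ i ∈ I', V i with hUdef
  have hUm : MeasurableSet U := (I' : Finset ℤ).measurableSet_biUnion fun i _ => hVm i
  have hUmeas : 1 - ENNReal.ofReal β < μ U := by
    rw [hUdef, measure_biUnion_finset (fun i _ j _ hij => hVdisj hij) fun i _ => hVm i, hIsum]
    exact hI
  have hI'ne : I'.Nonempty := by
    rw [Finset.nonempty_iff_ne_empty]
    intro hemp
    rw [← hIsum, hemp, Finset.sum_empty] at hI
    exact (tsub_pos_iff_lt.2 hβlt1).ne' (lt_irrefl _ (hI.trans (tsub_pos_iff_lt.2 hβlt1))).elim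
  set m : ℝ≥0∞ := I'.inf' hI'ne (fun i => μ (V i)) with hmdef
  have hm0 : 0 < m := by
    rw [hmdef, Finset.lt_inf'_iff]
    intro i hi
    exact (Finset.mem_filter.1 hi).2
  have hmle : ∀ i ∈ I', m ≤ μ (V i) := fun i hi => Finset.inf'_le _ hi
  have hmtop : m ≠ ∞ := by
    obtain ⟨i, hi⟩ := hI'ne
    exact ne_top_of_le_ne_top (measure_ne_top μ (V i)) (hmle i hi)
  -- the threshold η
  set η : ℝ≥0∞ := min (ENNReal.ofReal β) (m / 4) with hηdef
  have hη0 : 0 < η := lt_min (by simpa using hβ0) (ENNReal.div_pos hm0.ne' (by norm_num))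
  have hηβ : η ≤ ENNReal.ofReal β := min_le_left _ _
  have hηtop : η ≠ ∞ := ne_top_of_le_ne_top ENNReal.ofReal_ne_top hηβ
  have hηm : η ≤ m / 4 := min_le_right _ _
  have hη1 : η ≤ 1 := hηβ.trans hβlt1.le
  -- choose N
  have htend : Tendsto (fun N => (μ.prod μ) (E N)) atTop (𝓝 1) := by
    rw [← hEcover]
    exact tendsto_measure_iUnion_atTop hEmono
  have hlt1 : 1 - η * η < 1 :=
    ENNReal.sub_lt_self ENNReal.one_ne_top one_ne_zero (ENNReal.mul_pos hη0.ne' hη0.ne').ne'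
  obtain ⟨N, hN⟩ := (htend.eventually (eventually_gt_nhds hlt1)).exists
  have hη2le1 : η * η ≤ 1 := by
    calc η * η ≤ 1 * 1 := mul_le_mul' hη1 hη1
    _ = 1 := one_mul 1
  have hEN : (μ.prod μ) (E N)ᶜ ≤ η * η := by
    rw [measure_compl (hEm N) (measure_ne_top _ _), measure_univ]
    rw [tsub_le_iff_right]
    calc (1:ℝ≥0∞) = (1 - η * η) + η * η := (tsub_add_cancel_of_le hη2le1).symm
    _ ≤ (μ.prod μ) (E N) + η * η := add_le_add_left hN.le _
    _ = η * η + (μ.prod μ) (E N) := add_comm _ _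
  -- the good section set G
  set sec : X → ℝ≥0∞ := fun x => μ (Prod.mk x ⁻¹' (E N)ᶜ) with hsecdef
  have hsecm : Measurable sec := measurable_measure_prodMk_left (hEm N).compl
  have hsecint : ∫⁻ x, sec x ∂μ = (μ.prod μ) (E N)ᶜ := (Measure.prod_apply (hEm N).compl).symm
  set G : Set X := {x | sec x < η} with hGdef
  have hGm : MeasurableSet G := hsecm measurableSet_Iio
  have hGc : μ Gᶜ ≤ η := by
    have hGcompl : Gᶜ = {x | η ≤ sec x} := by
      ext x; simp [hGdef, not_lt]
    rw [hGcompl]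
    calc μ {x | η ≤ sec x} ≤ (∫⁻ x, sec x ∂μ) / η :=
          meas_ge_le_lintegral_div hsecm.aemeasurable hη0.ne' hηtop
    _ ≤ η * η / η := by gcongr; rw [hsecint]; exact hEN
    _ = η := by rw [mul_div_assoc, ENNReal.div_self hη0.ne' hηtop, mul_one]
  -- Lusin sets
  obtain ⟨KF, hKFcomp, hKFm, hKFμ, hKFmod⟩ := lusin_unif μ hFsm hFL2 hβ0
  obtain ⟨δF, hδF0, hδF⟩ := hKFmod (ε / 8) (by positivity)
  have hLn : ∀ n : ℕ, ∃ C : Set X, IsCompact C ∧ MeasurableSet C ∧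
      μ Cᶜ ≤ ENNReal.ofReal (β / (N + 1)) ∧ ∃ δ > (0:ℝ), ∀ x ∈ C, ∀ y ∈ C, dist x y < δ →
        |F ((⇑T)^[a n] x) - F ((⇑T)^[a n] y)| < ε / 2 := by
    intro n
    have hmp : MeasurePreserving ((⇑T)^[a n]) μ μ := hT.iterate (a n)
    have hsm' : StronglyMeasurable (F ∘ (⇑T)^[a n]) :=
      hFsm.comp_measurable (T.continuous.measurable.iterate (a n))
    have hL2' : MemLp (F ∘ (⇑T)^[a n]) 2 μ := by
      refine (memLp_map_measure_iff ?_ hmp.measurable.aemeasurable).1 ?_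
      · rw [hmp.map_eq]; exact hFL2.aestronglyMeasurable
      · rw [hmp.map_eq]; exact hFL2
    obtain ⟨C, h1, h2, h3, h4⟩ := lusin_unif μ hsm' hL2'
      (show (0:ℝ) < β / (N + 1) by positivity)
    obtain ⟨δ, hδ0, hδ⟩ := h4 (ε / 2) (by positivity)
    exact ⟨C, h1, h2, h3, δ, hδ0, fun x hx y hy hd => hδ x hx y hy hd⟩
  choose C hCcomp hCm hCμ δs hδs0 hδs using hLn
  have hδmin : ∀ M : ℕ, ∃ δ' > (0:ℝ), ∀ n < M, δ' ≤ δs n := by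
    intro M
    induction M with
    | zero => exact ⟨1, one_pos, fun n h => absurd h (Nat.not_lt_zero n)⟩
    | succ M ih =>
      obtain ⟨δ', hδ'0, hδ'⟩ := ih
      refine ⟨min δ' (δs M), lt_min hδ'0 (hδs0 M), fun n hn => ?_⟩
      rcases Nat.lt_succ_iff_lt_or_eq.1 hn with h | h
      · exact (min_le_left _ _).trans (hδ' n h)
      · rw [h]; exact min_le_right _ _
  obtain ⟨δ', hδ'0, hδ'le⟩ := hδmin N
  -- assemble the set
  set M0 : Set X := KF ∩ (⋂ n ∈ Finset.range N, C n) ∩ G ∩ U ∩ S with hM0def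
  have hM0m : MeasurableSet M0 :=
    (((hKFm.inter ((Finset.range N).measurableSet_biInter fun n _ => hCm n)).inter
      hGm).inter hUm).inter hSm
  have hCap : μ (⋂ n ∈ Finset.range N, C n)ᶜ ≤ ENNReal.ofReal β := by
    rw [Set.compl_iInter₂]
    calc μ (⋃ n ∈ Finset.range N, (C n)ᶜ) ≤ ∑ n ∈ Finset.range N, μ (C n)ᶜ :=
          measure_biUnion_finset_le _ _
    _ ≤ ∑ _n ∈ Finset.range N, ENNReal.ofReal (β / (N + 1)) :=
          Finset.sum_le_sum fun n _ => hCμ n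
    _ = (N : ℝ≥0∞) * ENNReal.ofReal (β / (N + 1)) := by
          rw [Finset.sum_const, Finset.card_range, nsmul_eq_mul]
    _ ≤ ENNReal.ofReal β := by
          rw [← ENNReal.ofReal_natCast, ← ENNReal.ofReal_mul (Nat.cast_nonneg N)]
          apply ENNReal.ofReal_le_ofReal
          rw [mul_div_assoc', div_le_iff₀ (by positivity)]
          nlinarith [hβ0.le, Nat.cast_nonneg (α := ℝ) N]
  have key : ∀ {b x : ℝ≥0∞}, b ≤ 1 → 1 - b < x → 1 - x ≤ b := by
    intro b x hb h
    rw [tsub_le_iff_right]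
    calc (1:ℝ≥0∞) = (1 - b) + b := (tsub_add_cancel_of_le hb).symm
    _ ≤ x + b := add_le_add_left h.le _
    _ = b + x := add_comm _ _
  have hUc : μ Uᶜ ≤ ENNReal.ofReal β := by
    rw [measure_compl hUm (measure_ne_top _ _), measure_univ]
    exact key hβlt1.le hUmeas
  have hM0c : μ M0ᶜ ≤ ENNReal.ofReal (c / 2) := by
    have h5 : μ M0ᶜ ≤ μ KFᶜ + μ (⋂ n ∈ Finset.range N, C n)ᶜ + μ Gᶜ + μ Uᶜ + μ Sᶜ := by
      rw [hM0def]
      simp only [Set.compl_inter]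
      refine le_trans (measure_union_le _ _) ?_
      gcongr
      refine le_trans (measure_union_le _ _) ?_
      gcongr
      refine le_trans (measure_union_le _ _) ?_
      gcongr
      exact measure_union_le _ _
    calc μ M0ᶜ ≤ μ KFᶜ + μ (⋂ n ∈ Finset.range N, C n)ᶜ + μ Gᶜ + μ Uᶜ + μ Sᶜ := h5
    _ ≤ ENNReal.ofReal β + ENNReal.ofReal β + ENNReal.ofReal β + ENNReal.ofReal β + 0 := by
        gcongr
        · exact hGc.trans hηβ
        · exact hSnull.le
    _ = ENNReal.ofReal (c / 2) := by
        rw [add_zero, ← ENNReal.ofReal_add hβ0.le hβ0.le,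
          ← ENNReal.ofReal_add (by positivity) hβ0.le,
          ← ENNReal.ofReal_add (by positivity) hβ0.le]
        congr 1
        rw [hβdef]; ring
  obtain ⟨K, hKM0, hKclosed, hKgap⟩ := hM0m.exists_isClosed_lt_add (measure_ne_top μ _)
    (show ENNReal.ofReal (c / 4) ≠ 0 by
      simp only [ne_eq, ENNReal.ofReal_eq_zero, not_le]; positivity)
  have hKm : MeasurableSet K := hKclosed.measurableSet
  have hKcomp : IsCompact K := hKclosed.isCompact
  have hKcμ : μ Kᶜ < ENNReal.ofReal c := by
    have h1 : Kᶜ ⊆ M0ᶜ ∪ (M0 \ K) := by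
      intro t ht
      by_cases htM : t ∈ M0
      · exact Or.inr ⟨htM, ht⟩
      · exact Or.inl htM
    have h2 : μ (M0 \ K) ≤ ENNReal.ofReal (c / 4) := by
      rw [measure_diff hKM0 hKm.nullMeasurableSet (measure_ne_top μ _)]
      exact tsub_le_iff_left.2 hKgap.le
    calc μ Kᶜ ≤ μ M0ᶜ + μ (M0 \ K) := le_trans (measure_mono h1) (measure_union_le _ _)
    _ ≤ ENNReal.ofReal (c / 2) + ENNReal.ofReal (c / 4) := add_le_add hM0c h2
    _ = ENNReal.ofReal (c / 2 + c / 4) := (ENNReal.ofReal_add (by positivity) (by positivity)).symm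
    _ < ENNReal.ofReal c := by
        rw [ENNReal.ofReal_lt_ofReal_iff hc0]
        linarith
  have hKμ : ENNReal.ofReal (1 - τ) < μ K := by
    have h0 : μ K + μ Kᶜ = 1 := by rw [measure_add_measure_compl hKm, measure_univ]
    have h2 : (1:ℝ≥0∞) < μ K + ENNReal.ofReal c :=
      h0 ▸ ENNReal.add_lt_add_left (measure_ne_top μ K) hKcμ
    have h4 : ENNReal.ofReal (1 - c) = 1 - ENNReal.ofReal c := by
      rw [ENNReal.ofReal_sub _ hc0.le, ENNReal.ofReal_one]
    have hcle1 : ENNReal.ofReal c ≤ 1 := by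
      rw [← ENNReal.ofReal_one]
      exact ENNReal.ofReal_le_ofReal (by linarith)
    have h5 : (1:ℝ≥0∞) - ENNReal.ofReal c < μ K := by
      rw [ENNReal.sub_lt_iff_lt_right ENNReal.ofReal_ne_top hcle1]
      exact h2
    exact lt_of_le_of_lt ((ENNReal.ofReal_le_ofReal hcτ).trans_eq h4) h5
  -- final verification
  refine ⟨K, hKcomp, hKμ, min δF δ', lt_min hδF0 hδ'0, ?_⟩
  intro x hx y hy hdist n
  obtain ⟨⟨⟨⟨hxKF, hxC⟩, hxG⟩, hxU⟩, hxS⟩ := hKM0 hx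
  obtain ⟨⟨⟨⟨hyKF, hyC⟩, hyG⟩, hyU⟩, hyS⟩ := hKM0 hy
  rw [hS_eq x hxS (a n), hS_eq y hyS (a n)]
  rcases lt_or_ge n N with hnN | hnN
  · have hxCn : x ∈ C n := Set.mem_iInter₂.1 hxC n (Finset.mem_range.2 hnN)
    have hyCn : y ∈ C n := Set.mem_iInter₂.1 hyC n (Finset.mem_range.2 hnN)
    have := hδs n x hxCn y hyCn
      (lt_of_lt_of_le hdist ((min_le_right _ _).trans (hδ'le n hnN)))
    linarith
  · obtain ⟨i, hiI, hxVi⟩ := Set.mem_iUnion₂.1 hxU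
    have hWsub : V i \ (Prod.mk x ⁻¹' (E N)ᶜ ∪ Prod.mk y ⁻¹' (E N)ᶜ) ⊆
        V i ∩ (Prod.mk x ⁻¹' E N) ∩ (Prod.mk y ⁻¹' E N) := by
      rintro z ⟨hz1, hz2⟩
      rw [Set.mem_union, not_or, Set.preimage_compl, Set.preimage_compl,
        Set.notMem_compl_iff, Set.notMem_compl_iff] at hz2
      exact ⟨⟨hz1, hz2.1⟩, hz2.2⟩
    have hm44 : η + η < m := by
      calc η + η ≤ m / 4 + m / 4 := add_le_add hηm hηm
      _ = m / 2 := by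
          rw [ENNReal.div_add_div_same, ← two_mul, show (4:ℝ≥0∞) = 2 * 2 by norm_num,
            ENNReal.mul_div_mul_left _ _ two_ne_zero ENNReal.ofNat_ne_top]
      _ < m := ENNReal.half_lt_self hm0.ne' hmtop
    have hWpos : μ (V i ∩ (Prod.mk x ⁻¹' E N) ∩ (Prod.mk y ⁻¹' E N)) ≠ 0 := by
      have h1 : μ (V i) - μ (Prod.mk x ⁻¹' (E N)ᶜ ∪ Prod.mk y ⁻¹' (E N)ᶜ) ≤
          μ (V i ∩ (Prod.mk x ⁻¹' E N) ∩ (Prod.mk y ⁻¹' E N)) :=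
        le_trans le_measure_diff (measure_mono hWsub)
      have h2 : μ (Prod.mk x ⁻¹' (E N)ᶜ ∪ Prod.mk y ⁻¹' (E N)ᶜ) < m :=
        lt_of_le_of_lt (measure_union_le _ _)
          (lt_of_le_of_lt (add_le_add hxG.le hyG.le) hm44)
      have h3 : 0 < μ (V i) - μ (Prod.mk x ⁻¹' (E N)ᶜ ∪ Prod.mk y ⁻¹' (E N)ᶜ) :=
        tsub_pos_iff_lt.2 (h2.trans_le (hmle i hiI))
      exact (lt_of_lt_of_le h3 h1).ne'
    obtain ⟨z, ⟨hzV, hzx⟩, hzy⟩ := nonempty_of_measure_ne_zero hWpos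
    have hx1 : d2 (a n) (x, z) ≤ g2 (x, z) + ε / 8 := by
      have := (hEmem N (x, z)).1 hzx (n - N)
      rwa [show N + (n - N) = n by omega] at this
    have hy1 : d2 (a n) (y, z) ≤ g2 (y, z) + ε / 8 := by
      have := (hEmem N (y, z)).1 hzy (n - N)
      rwa [show N + (n - N) = n by omega] at this
    simp only [hd2def, hg2def] at hx1 hy1
    have hxI : F x ∈ Set.Ico ((i:ℝ) * w) (((i:ℝ) + 1) * w) := hxVi
    have hzI : F z ∈ Set.Ico ((i:ℝ) * w) (((i:ℝ) + 1) * w) := hzV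
    have hFxz : |F x - F z| < w := by
      rw [abs_sub_lt_iff]
      obtain ⟨ha1, ha2⟩ := hxI
      obtain ⟨hb1, hb2⟩ := hzI
      have hiw : ((i:ℝ) + 1) * w = (i:ℝ) * w + w := by ring
      rw [hiw] at ha2 hb2
      constructor <;> linarith
    have hFxy : |F x - F y| < ε / 8 :=
      hδF x hxKF y hyKF (lt_of_lt_of_le hdist (min_le_left _ _))
    have tri1 : |F ((⇑T)^[a n] x) - F ((⇑T)^[a n] y)| ≤
        |F ((⇑T)^[a n] x) - F ((⇑T)^[a n] z)| + |F ((⇑T)^[a n] z) - F ((⇑T)^[a n] y)| :=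
      abs_sub_le _ _ _
    have tri2 : |F ((⇑T)^[a n] z) - F ((⇑T)^[a n] y)| = |F ((⇑T)^[a n] y) - F ((⇑T)^[a n] z)| :=
      abs_sub_comm _ _
    have tri3 : |F y - F z| ≤ |F y - F x| + |F x - F z| := abs_sub_le _ _ _
    have tri4 : |F y - F x| = |F x - F y| := abs_sub_comm _ _
    rw [hwdef] at hFxz
    linarith
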